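/- Let K satisfy the kernel assumption and let δ > 0. Then the convolution-smoothed loss l_δ(x) = ∫_ℝ |y| K_δ(x−y) dy is finite for every x ∈ ℝ, l_δ is convex and twice continuously differentiable on ℝ, and for every x ∈ ℝ its derivatives are l_δ'(x) = 2·K̃_δ(x) − 1 and l_δ''(x) = 2·K_δ(x). -/

import Mathlib

open MeasureTheory
open Set
open scoped BigOperators

/-- The kernel assumption: `K` is a nonnegative, symmetric kernel integrating to one,
bounded, Lipschitz, positive at zero, and `x ↦ x * K x` is bounded, Lipschitz and
absolutely integrable. -/
structure IsGoodKernel (K : ℝ → ℝ) : Prop where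
  nonneg : ∀ x, 0 ≤ K x
  symm : ∀ x, K x = K (-x)
  integral_one : (∫ x, K x) = 1
  bounded : ∃ B, ∀ x, |K x| ≤ B
  lipschitz : ∃ L : NNReal, LipschitzWith L K
  pos_at_zero : 0 < K 0
  bar_bounded : ∃ B, ∀ x, |x * K x| ≤ B
  bar_lipschitz : ∃ L : NNReal, LipschitzWith L (fun x => x * K x)
  bar_integrable : Integrable (fun x => x * K x)

/-- The scaled kernel `K_δ(x) = (1/δ) K(x/δ)`. -/
noncomputable def scaledKernel (K : ℝ → ℝ) (δ : ℝ) (x : ℝ) : ℝ := (1 / δ) * K (x / δ)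

/-- The integrated kernel `K̃(x) = ∫_{-∞}^x K`. -/
noncomputable def intKernel (K : ℝ → ℝ) (x : ℝ) : ℝ := ∫ y in Set.Iic x, K y

/-- The convolution-type smoothed loss `l_δ(x) = ∫ |y| K_δ(x - y) dy`. -/
noncomputable def smoothedLoss (K : ℝ → ℝ) (δ : ℝ) (x : ℝ) : ℝ :=
  ∫ y, |y| * scaledKernel K δ (x - y)

section Aux
variable {K : ℝ → ℝ} {δ : ℝ}

lemma gk_integrable (hK : ∀ x, 0 ≤ K x) (h1 : (∫ x, K x) = 1) : Integrable K := by
  by_contra h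
  rw [integral_undef h] at h1
  norm_num at h1

lemma gk_cont (hK : ∃ L : NNReal, LipschitzWith L K) : Continuous K :=
  hK.choose_spec.continuous

lemma sk_cont (hK : Continuous K) (hδ : 0 < δ) : Continuous (scaledKernel K δ) := by
  unfold scaledKernel
  fun_prop

lemma sk_integrable (hK : Integrable K) (hδ : 0 < δ) : Integrable (scaledKernel K δ) :=
  (hK.comp_div hδ.ne').const_mul _

lemma sk_integral_one (hK : Integrable K) (h1 : (∫ x, K x) = 1) (hδ : 0 < δ) :
    (∫ x, scaledKernel K δ x) = 1 := by
  unfold scaledKernel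
  rw [integral_const_mul, MeasureTheory.Measure.integral_comp_div K δ, h1, abs_of_pos hδ, smul_eq_mul]
  field_simp

-- the function u ↦ u * K_δ(u)
lemma bar_sk_eq (hδ : 0 < δ) :
    (fun u : ℝ => u * scaledKernel K δ u) = (fun u => (u / δ) * K (u / δ)) := by
  funext u
  unfold scaledKernel
  field_simp

lemma bar_sk_integrable (hbar : Integrable (fun x => x * K x)) (hδ : 0 < δ) :
    Integrable (fun u : ℝ => u * scaledKernel K δ u) := by
  rw [bar_sk_eq hδ]
  exact hbar.comp_div hδ.ne'

lemma bar_sk_integral_zero (hsymm : ∀ x, K x = K (-x)) (hbar : Integrable (fun x => x * K x))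
    (hδ : 0 < δ) : (∫ u, u * scaledKernel K δ u) = 0 := by
  have h := integral_neg_eq_self (fun u : ℝ => u * scaledKernel K δ u) volume
  have h2 : (∫ u : ℝ, (-u) * scaledKernel K δ (-u)) = ∫ u : ℝ, -(u * scaledKernel K δ u) := by
    congr 1
    funext u
    unfold scaledKernel
    rw [show (-u)/δ = -(u/δ) by ring, ← hsymm (u/δ)]
    ring
  rw [h2, integral_neg] at h
  linarith

end Aux

section Main
variable {K : ℝ → ℝ} {δ : ℝ}

/-- FTC for `x ↦ ∫_{Iic x} f` with `f` continuous and integrable. -/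
lemma hasDerivAt_integral_Iic {f : ℝ → ℝ} (hf : Integrable f) (hc : Continuous f) (x : ℝ) :
    HasDerivAt (fun u => ∫ y in Iic u, f y) (f x) x := by
  have heq : (fun u => ∫ y in Iic u, f y) =
      fun u => (∫ y in Iic (0:ℝ), f y) + ∫ y in (0:ℝ)..u, f y := by
    funext u
    rw [← intervalIntegral.integral_Iic_sub_Iic (hf.integrableOn) (hf.integrableOn)]
    ring
  rw [heq]
  exact (intervalIntegral.integral_hasDerivAt_right (hf.intervalIntegrable)
    (hc.stronglyMeasurableAtFilter _ _) hc.continuousAt).const_add _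

lemma integrand_integrable (hK : IsGoodKernel K) (hδ : 0 < δ) (x : ℝ) :
    Integrable (fun y => |y| * scaledKernel K δ (x - y)) := by
  have hKint : Integrable K := gk_integrable hK.nonneg hK.integral_one
  have hcont : Continuous (scaledKernel K δ) := sk_cont (gk_cont hK.lipschitz) hδ
  have hg : Integrable (fun y => |x| * scaledKernel K δ (x - y) +
      |(x - y) * scaledKernel K δ (x - y)|) := by
    refine Integrable.add ?_ ?_
    · exact ((sk_integrable hKint hδ).comp_sub_left x).const_mul _
    · exact ((bar_sk_integrable hK.bar_integrable hδ).comp_sub_left x).abs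
  refine hg.mono' ?_ ?_
  · exact (continuous_abs.mul (hcont.comp (by fun_prop))).aestronglyMeasurable
  · refine Filter.Eventually.of_forall fun y => ?_
    have h0 : 0 ≤ scaledKernel K δ (x - y) :=
      mul_nonneg (by positivity) (hK.nonneg _)
    rw [Real.norm_eq_abs, abs_of_nonneg (mul_nonneg (abs_nonneg _) h0), abs_mul,
      abs_of_nonneg h0]
    have : |y| ≤ |x| + |x - y| := by
      have := abs_sub_abs_le_abs_sub y x
      have := abs_sub_comm y x
      nlinarith [abs_nonneg (y - x), abs_nonneg y, abs_sub (y:ℝ) (x:ℝ)]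
    nlinarith [this, h0, abs_nonneg (x - y)]

end Main

section Main2
variable {K : ℝ → ℝ} {δ : ℝ}

lemma sk_setIntegral_Iic (hKint : Integrable K) (hδ : 0 < δ) (x : ℝ) :
    (∫ u in Iic x, scaledKernel K δ u) = intKernel K (x / δ) := by
  have h1 : (∫ u in Iic x, scaledKernel K δ u)
      = ∫ u, (Iic x).indicator (scaledKernel K δ) u := by
    rw [integral_indicator measurableSet_Iic]
  have h2 : (Iic x).indicator (scaledKernel K δ)
      = fun u => (1 / δ) * (Iic (x / δ)).indicator K (u / δ) := by
    funext u
    have himp : ∀ a b : ℝ, a / δ ≤ b / δ → a ≤ b := fun a b hab => by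
      have := mul_le_mul_of_nonneg_right hab hδ.le
      rwa [div_mul_cancel₀ _ hδ.ne', div_mul_cancel₀ _ hδ.ne'] at this
    by_cases h : u ≤ x
    · have h' : u / δ ≤ x / δ := by gcongr
      simp [Set.indicator_of_mem, h, h', scaledKernel, mem_Iic]
    · have h' : ¬ (u / δ ≤ x / δ) := fun hc => h (himp _ _ hc)
      simp [Set.indicator_of_notMem, h, h', mem_Iic]
  rw [h1, h2, integral_const_mul, MeasureTheory.Measure.integral_comp_div
    ((Iic (x / δ)).indicator K) δ, abs_of_pos hδ, smul_eq_mul,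
    ← mul_assoc, one_div, inv_mul_cancel₀ hδ.ne', one_mul,
    integral_indicator measurableSet_Iic]
  rfl

lemma closed_form (hK : IsGoodKernel K) (hδ : 0 < δ) (x : ℝ) :
    smoothedLoss K δ x = x * (2 * (∫ u in Iic x, scaledKernel K δ u) - 1)
      - 2 * ∫ u in Iic x, u * scaledKernel K δ u := by
  have hKint : Integrable K := gk_integrable hK.nonneg hK.integral_one
  have hsk : Integrable (scaledKernel K δ) := sk_integrable hKint hδ
  have hbar : Integrable (fun u : ℝ => u * scaledKernel K δ u) :=
    bar_sk_integrable hK.bar_integrable hδ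
  have hf : Integrable (fun u => |x - u| * scaledKernel K δ u) := by
    have := (integrand_integrable hK hδ x).comp_sub_left x
    simpa using this
  have hl : smoothedLoss K δ x = ∫ u, |x - u| * scaledKernel K δ u := by
    rw [smoothedLoss,
      ← integral_sub_left_eq_self (fun y => |y| * scaledKernel K δ (x - y)) volume x]
    simp only [sub_sub_cancel]
  have hsplit := intervalIntegral.integral_Iic_add_Ioi (b := x) hf.integrableOn hf.integrableOn
  have hIic : (∫ u in Iic x, |x - u| * scaledKernel K δ u)
      = x * (∫ u in Iic x, scaledKernel K δ u) - ∫ u in Iic x, u * scaledKernel K δ u := by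
    rw [← integral_const_mul, ← integral_sub (hsk.integrableOn.const_mul x) hbar.integrableOn]
    refine setIntegral_congr_fun measurableSet_Iic fun u hu => ?_
    rw [abs_of_nonneg (by simp at hu; linarith)]
    ring
  have hIoi : (∫ u in Ioi x, |x - u| * scaledKernel K δ u)
      = (∫ u in Ioi x, u * scaledKernel K δ u) - x * (∫ u in Ioi x, scaledKernel K δ u) := by
    rw [← integral_const_mul, ← integral_sub hbar.integrableOn (hsk.integrableOn.const_mul x)]
    refine setIntegral_congr_fun measurableSet_Ioi fun u hu => ?_
    rw [abs_of_nonpos (by simp at hu; linarith)]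
    ring
  have htot1 := intervalIntegral.integral_Iic_add_Ioi (b := x) hsk.integrableOn hsk.integrableOn
  have htot2 := intervalIntegral.integral_Iic_add_Ioi (b := x) hbar.integrableOn hbar.integrableOn
  rw [sk_integral_one hKint hK.integral_one hδ] at htot1
  rw [bar_sk_integral_zero hK.symm hK.bar_integrable hδ] at htot2
  have hB : (∫ u in Ioi x, scaledKernel K δ u) = 1 - ∫ u in Iic x, scaledKernel K δ u := by
    linarith
  have hD : (∫ u in Ioi x, u * scaledKernel K δ u)
      = - ∫ u in Iic x, u * scaledKernel K δ u := by linarith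
  rw [hl, ← hsplit, hIic, hIoi, hB, hD]
  ring

end Main2

/-- the smoothed loss is well defined (the defining integrand is integrable
for every `x`), convex, twice continuously differentiable, and its derivatives are
`l_δ'(x) = 2 K̃_δ(x) - 1` and `l_δ''(x) = 2 K_δ(x)`. -/
theorem smoothedLoss_integrable_convex_contDiff_derivs
    (K : ℝ → ℝ) (hK : IsGoodKernel K) (δ : ℝ) (hδ : 0 < δ) :
    (∀ x : ℝ, Integrable (fun y => |y| * scaledKernel K δ (x - y))) ∧
    ConvexOn ℝ Set.univ (smoothedLoss K δ) ∧
    ContDiff ℝ 2 (smoothedLoss K δ) ∧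
    (∀ x : ℝ, deriv (smoothedLoss K δ) x = 2 * intKernel K (x / δ) - 1) ∧
    (∀ x : ℝ, deriv (deriv (smoothedLoss K δ)) x = 2 * scaledKernel K δ x) := by
  have hKint : Integrable K := gk_integrable hK.nonneg hK.integral_one
  have hcontK : Continuous K := gk_cont hK.lipschitz
  have hsk : Integrable (scaledKernel K δ) := sk_integrable hKint hδ
  have hskc : Continuous (scaledKernel K δ) := sk_cont hcontK hδ
  have hsknn : ∀ x, 0 ≤ scaledKernel K δ x := fun x =>
    mul_nonneg (by positivity) (hK.nonneg _)
  have hbar : Integrable (fun u : ℝ => u * scaledKernel K δ u) :=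
    bar_sk_integrable hK.bar_integrable hδ
  have hbarc : Continuous (fun u : ℝ => u * scaledKernel K δ u) := continuous_id.mul hskc
  set G : ℝ → ℝ := fun u => ∫ y in Iic u, scaledKernel K δ y with hGdef
  set H : ℝ → ℝ := fun u => ∫ y in Iic u, y * scaledKernel K δ y with hHdef
  have hG : ∀ x, HasDerivAt G (scaledKernel K δ x) x := fun x =>
    hasDerivAt_integral_Iic hsk hskc x
  have hH : ∀ x, HasDerivAt H (x * scaledKernel K δ x) x := fun x =>
    hasDerivAt_integral_Iic hbar hbarc x
  have hcf : smoothedLoss K δ = fun x => x * (2 * G x - 1) - 2 * H x :=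
    funext fun x => closed_form hK hδ x
  have hl' : ∀ x, HasDerivAt (smoothedLoss K δ) (2 * G x - 1) x := by
    intro x
    rw [hcf]
    have h1 : HasDerivAt (fun x => x * (2 * G x - 1) - 2 * H x)
        (1 * (2 * G x - 1) + x * (2 * scaledKernel K δ x) - 2 * (x * scaledKernel K δ x)) x :=
      ((hasDerivAt_id x).mul (((hG x).const_mul 2).sub_const 1)).sub ((hH x).const_mul 2)
    convert h1 using 1
    ring
  have hderiv1 : deriv (smoothedLoss K δ) = fun x => 2 * G x - 1 :=
    funext fun x => (hl' x).deriv
  have hl'' : ∀ x, HasDerivAt (deriv (smoothedLoss K δ)) (2 * scaledKernel K δ x) x := by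
    intro x
    rw [hderiv1]
    exact ((hG x).const_mul 2).sub_const 1
  have hderiv2 : ∀ x, deriv (deriv (smoothedLoss K δ)) x = 2 * scaledKernel K δ x :=
    fun x => (hl'' x).deriv
  have hdiff : Differentiable ℝ (smoothedLoss K δ) := fun x => (hl' x).differentiableAt
  have hdiff' : Differentiable ℝ (deriv (smoothedLoss K δ)) := fun x =>
    (hl'' x).differentiableAt
  have hcont2 : Continuous (deriv (deriv (smoothedLoss K δ))) := by
    have : deriv (deriv (smoothedLoss K δ)) = fun x => 2 * scaledKernel K δ x :=
      funext hderiv2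
    rw [this]
    exact continuous_const.mul hskc
  refine ⟨integrand_integrable hK hδ, ?_, ?_, ?_, hderiv2⟩
  · refine convexOn_of_deriv2_nonneg convex_univ hdiff.continuous.continuousOn
      (hdiff.differentiableOn) (hdiff'.differentiableOn) fun x _ => ?_
    have h2 : deriv^[2] (smoothedLoss K δ) x = deriv (deriv (smoothedLoss K δ)) x := rfl
    rw [h2, hderiv2 x]
    exact mul_nonneg (by norm_num) (hsknn x)
  · rw [show (2 : WithTop ℕ∞) = 1 + 1 by norm_num, contDiff_succ_iff_deriv]
    refine ⟨hdiff, by simp, ?_⟩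
    rw [contDiff_one_iff_deriv]
    exact ⟨hdiff', hcont2⟩
  · intro x
    rw [hderiv1]
    simp only [hGdef]
    rw [sk_setIntegral_Iic hKint hδ x]
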